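/- arXiv:1406.5752 — 3 statements merged into one kernel-verified Lean document; each statement's English description precedes it below -/
import Mathlib

section
/- Suppose a nonnegative matrix X ∈ R_{+}^{n×p} admits a separable factorization X = F X_A where the rows of X_A (indexed by A ⊆ [n], |A| = k) are simplicial, i.e., no row of X_A is a nonnegative combination of the remaining rows of X_A, and F is nonnegative. Then A is a solution of the minimum conical hull problem: there is no subset B ⊆ [n] with |B| < |A| such that every row of X is a nonnegative combination of rows of X_B with X_B simplicial. -/
/-- The conical hull of the rows of `X` indexed by the finite set `S`. -/
def coneOf {n p : ℕ} (S : Finset (Fin n)) (X : Matrix (Fin n) (Fin p) ℝ) :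
    Set (Fin p → ℝ) :=
  {x | ∃ a : Fin n → ℝ, (∀ i, 0 ≤ a i) ∧ x = ∑ i ∈ S, a i • X i}

/-- A set of rows of `X` is simplicial if no row is a nonnegative combination of the
remaining rows. -/
def Simplicial {n p : ℕ} (X : Matrix (Fin n) (Fin p) ℝ) (S : Finset (Fin n)) : Prop :=
  ∀ i ∈ S, X i ∉ coneOf (S.erase i) X

/-- If a nonnegative `X` admits a separable factorization with simplicial anchor rows
`X_A`, then `A` solves the minimum conical hull problem: no strictly smaller simplicial
subset `B` has all rows of `X` as nonnegative combinations of its rows. -/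
theorem simplicial_separable_factorization_is_minimum_conical_hull
    {n p : ℕ} (X : Matrix (Fin n) (Fin p) ℝ) (hX : ∀ i j, 0 ≤ X i j)
    (A : Finset (Fin n)) (hA : Simplicial X A)
    (hcov : ∀ r : Fin n, X r ∈ coneOf A X) :
    ¬ ∃ B : Finset (Fin n), B.card < A.card ∧ Simplicial X B ∧
        ∀ r : Fin n, X r ∈ coneOf B X := by
  classical
  rintro ⟨B, hlt, hBsimp, hBcov⟩
  -- rows of A are nonzero
  have hAne : ∀ a ∈ A, X a ≠ 0 := by
    intro a ha h0
    exact hA a ha ⟨fun _ => 0, fun _ => le_rfl, by simp [h0]⟩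
  choose lam hlam hlameq using hBcov
  choose mu hmu hmueq using hcov
  set c : Fin n → Fin n → ℝ := fun a a' => ∑ b ∈ B, lam a b * mu b a' with hc
  have hcnn : ∀ a a', 0 ≤ c a a' := by
    intro a a'
    exact Finset.sum_nonneg fun b _ => mul_nonneg (hlam a b) (hmu b a')
  have hXeq : ∀ a : Fin n, X a = ∑ a' ∈ A, c a a' • X a' := by
    intro a
    rw [hlameq a, Finset.sum_congr rfl (fun b _ => by rw [hmueq b])]
    simp_rw [Finset.smul_sum, smul_smul]
    rw [Finset.sum_comm]
    simp_rw [← Finset.sum_smul]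
    rfl
  -- self coefficient is ≥ 1
  have hself : ∀ a ∈ A, 1 ≤ c a a := by
    intro a ha
    by_contra h
    push_neg at h
    have hpos : 0 < 1 - c a a := by linarith
    have heq : X a = c a a • X a + ∑ a' ∈ A.erase a, c a a' • X a' := by
      conv_lhs => rw [hXeq a]
      rw [← Finset.add_sum_erase A _ ha]
    have heq2 : (1 - c a a) • X a = ∑ a' ∈ A.erase a, c a a' • X a' := by
      rw [sub_smul, one_smul]
      nth_rewrite 1 [heq]
      abel
    apply hA a ha
    refine ⟨fun a' => (1 - c a a)⁻¹ * c a a', fun a' => mul_nonneg (by positivity) (hcnn a a'), ?_⟩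
    have := congrArg (fun v => (1 - c a a)⁻¹ • v) heq2
    simp only [smul_smul, inv_mul_cancel₀ hpos.ne', one_smul, Finset.smul_sum] at this
    rw [this]
  -- zero-forcing lemma
  have hzero : ∀ a1 ∈ A, ∀ a2 ∈ A, a1 ≠ a2 → ¬ (0 < c a1 a2) := by
    intro a1 ha1 a2 ha2 hne hpos
    have ha2' : a2 ∈ A.erase a1 := Finset.mem_erase.2 ⟨hne.symm, ha2⟩
    have hX2 : X a2 = 0 := by
      funext j
      have heq : X a1 j = c a1 a1 * X a1 j + ∑ a' ∈ A.erase a1, c a1 a' * X a' j := by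
        have := congrFun (hXeq a1) j
        rw [← Finset.add_sum_erase A _ ha1] at this
        simpa [Finset.sum_apply, Pi.smul_apply, smul_eq_mul] using this
      have hsum_le : ∑ a' ∈ A.erase a1, c a1 a' * X a' j ≤ 0 := by
        nlinarith [hself a1 ha1, hX a1 j]
      have hle : c a1 a2 * X a2 j ≤ ∑ a' ∈ A.erase a1, c a1 a' * X a' j :=
        Finset.single_le_sum (f := fun a' => c a1 a' * X a' j)
          (fun a' _ => mul_nonneg (hcnn a1 a') (hX a' j)) ha2'
      have h0 : c a1 a2 * X a2 j = 0 :=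
        le_antisymm (hle.trans hsum_le) (mul_nonneg (hcnn a1 a2) (hX a2 j))
      have := mul_eq_zero.1 h0
      rcases this with h | h
      · exact absurd h hpos.ne'
      · exact h
    exact hAne a2 ha2 hX2
  -- for each a ∈ A there is b ∈ B with positive product
  have hkey : ∀ a ∈ A, ∃ b ∈ B, 0 < lam a b * mu b a := by
    intro a ha
    have h1 : (0:ℝ) < ∑ b ∈ B, lam a b * mu b a := lt_of_lt_of_le one_pos (hself a ha)
    by_contra h
    push_neg at h
    have : ∑ b ∈ B, lam a b * mu b a ≤ 0 :=
      Finset.sum_nonpos fun b hb => h b hb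
    linarith
  choose! f hfB hfpos using hkey
  have hinj : Set.InjOn f ↑A := by
    intro a1 ha1 a2 ha2 hf
    by_contra hne
    have hp1 := hfpos a1 ha1
    have hp2 := hfpos a2 ha2
    rw [hf] at hp1
    set b := f a2
    have hlam1 : 0 < lam a1 b := by
      rcases (hlam a1 b).lt_or_eq with h | h
      · exact h
      · exfalso; rw [← h, zero_mul] at hp1; exact lt_irrefl 0 hp1
    have hmu2 : 0 < mu b a2 := by
      rcases (hmu b a2).lt_or_eq with h | h
      · exact h
      · exfalso; rw [← h, mul_zero] at hp2; exact lt_irrefl 0 hp2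
    apply hzero a1 ha1 a2 ha2 hne
    have hle : lam a1 b * mu b a2 ≤ c a1 a2 :=
      Finset.single_le_sum (f := fun b' => lam a1 b' * mu b' a2)
        (fun b' _ => mul_nonneg (hlam a1 b') (hmu b' a2)) (hfB a2 ha2)
    exact lt_of_lt_of_le (mul_pos hlam1 hmu2) hle
  have hmaps : ∀ a ∈ A, f a ∈ B := fun a ha => hfB a ha
  have hcard : A.card ≤ B.card := Finset.card_le_card_of_injOn f hmaps hinj
  omega
end

section
/- Let O_i ∈ R^{p_i×k} and O_j ∈ R^{p_j×k} have full column rank k, and let a, b ∈ R^k be entrywise nonzero vectors with all ratios b_s/a_s distinct. Suppose X_1 = O_i Diag(a) O_j^T and X_2 = O_i Diag(b) O_j^T. If also Õ_i Diag(a) Õ_j^T = X_1 and Õ_i Diag(b) Õ_j^T = X_2 for matrices Õ_i, Õ_j of the same shapes with full column rank, then for each s ∈ [k] there exist t ∈ [k] and a nonzero scalar δ such that Õ_i^t = δ O_i^s and Õ_j^t = O_j^s/δ. Consequently the set of rank-one matrices {O_i^s ⊗ O_j^s}_{s∈[k]} is uniquely determined by X_1 and X_2. -/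
open Matrix

private lemma gram_unit' {m n : ℕ} (A : Matrix (Fin m) (Fin n) ℝ)
    (h : ∀ v, A.mulVec v = 0 → v = 0) : IsUnit (Aᵀ * A) := by
  rw [← Matrix.mulVec_injective_iff_isUnit]
  have key : ∀ v, (Aᵀ * A).mulVec v = 0 → v = 0 := by
    intro v hv
    apply h
    have h2 : v ⬝ᵥ ((Aᵀ * A) *ᵥ v) = 0 := by rw [hv, dotProduct_zero]
    rw [← Matrix.mulVec_mulVec, Matrix.dotProduct_mulVec, Matrix.vecMul_transpose] at h2
    exact dotProduct_self_eq_zero.mp h2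
  intro x y hxy
  exact sub_eq_zero.mp (key (x - y) (by rw [Matrix.mulVec_sub, hxy, sub_self]))

private lemma left_cancel' {p k n : ℕ} (A : Matrix (Fin p) (Fin k) ℝ)
    (hA : ∀ v, A.mulVec v = 0 → v = 0)
    (X Y : Matrix (Fin k) (Fin n) ℝ) (h : A * X = A * Y) : X = Y := by
  have hg := gram_unit' A hA
  have hd : IsUnit (Aᵀ * A).det := (Matrix.isUnit_iff_isUnit_det _).mp hg
  have hinv : (Aᵀ * A)⁻¹ * (Aᵀ * A) = 1 := Matrix.nonsing_inv_mul _ hd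
  calc X = ((Aᵀ * A)⁻¹ * (Aᵀ * A)) * X := by rw [hinv, Matrix.one_mul]
    _ = (Aᵀ * A)⁻¹ * (Aᵀ * (A * X)) := by simp [Matrix.mul_assoc]
    _ = (Aᵀ * A)⁻¹ * (Aᵀ * (A * Y)) := by rw [h]
    _ = ((Aᵀ * A)⁻¹ * (Aᵀ * A)) * Y := by simp [Matrix.mul_assoc]
    _ = Y := by rw [hinv, Matrix.one_mul]

private lemma right_cancel' {p k n : ℕ} (B : Matrix (Fin p) (Fin k) ℝ)
    (hB : ∀ v, B.mulVec v = 0 → v = 0)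
    (X Y : Matrix (Fin n) (Fin k) ℝ) (h : X * Bᵀ = Y * Bᵀ) : X = Y := by
  have h' : B * Xᵀ = B * Yᵀ := by
    have := congrArg Matrix.transpose h
    simpa [Matrix.transpose_mul] using this
  have := left_cancel' B hB Xᵀ Yᵀ h'
  calc X = Xᵀᵀ := (Matrix.transpose_transpose X).symm
    _ = Yᵀᵀ := by rw [this]
    _ = Y := Matrix.transpose_transpose Y

private lemma diag_mul_inv' {k : ℕ} (a : Fin k → ℝ) (ha : ∀ s, a s ≠ 0) :
    diagonal a * diagonal (fun s => (a s)⁻¹) = 1 := by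
  rw [Matrix.diagonal_mul_diagonal]
  have hfun : (fun i => a i * (a i)⁻¹) = fun _ => (1 : ℝ) :=
    funext fun s => mul_inv_cancel₀ (ha s)
  rw [hfun, Matrix.diagonal_one]

private lemma key_factor' {p q k : ℕ}
    (A A' : Matrix (Fin p) (Fin k) ℝ)
    (B' : Matrix (Fin q) (Fin k) ℝ) (hB' : ∀ v, B'.mulVec v = 0 → v = 0)
    (a : Fin k → ℝ) (ha : ∀ s, a s ≠ 0)
    (C : Matrix (Fin k) (Fin q) ℝ)
    (h : A' * diagonal a * B'ᵀ = A * C) : ∃ P : Matrix (Fin k) (Fin k) ℝ, A' = A * P := by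
  have hG := gram_unit' B' hB'
  set R := B' * (B'ᵀ * B')⁻¹ with hRdef
  have hR : B'ᵀ * R = 1 := by
    rw [hRdef, ← Matrix.mul_assoc, Matrix.mul_nonsing_inv _ ((Matrix.isUnit_iff_isUnit_det _).mp hG)]
  refine ⟨C * R * diagonal (fun s => (a s)⁻¹), ?_⟩
  have h1 : A' * diagonal a = A * (C * R) := by
    have h2 := congrArg (· * R) h
    simp only [Matrix.mul_assoc] at h2
    rw [hR, Matrix.mul_one] at h2
    exact h2
  have h3 := congrArg (· * diagonal (fun s => (a s)⁻¹)) h1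
  simp only [Matrix.mul_assoc] at h3
  rw [diag_mul_inv' a ha, Matrix.mul_one] at h3
  rw [h3]
  simp [Matrix.mul_assoc]

/-- Identifiability: two mixture moments `X₁ = Oᵢ Diag(a) Oⱼᵀ` and
`X₂ = Oᵢ Diag(b) Oⱼᵀ` with distinct ratios `b_s/a_s` determine the columns of
`Oᵢ, Oⱼ` up to matching and reciprocal scaling; hence the rank-one components
`Oᵢ^s ⊗ Oⱼ^s` are uniquely determined. -/
theorem identifiability_two_moments
    {pi pj k : ℕ}
    (Oi : Matrix (Fin pi) (Fin k) ℝ) (Oj : Matrix (Fin pj) (Fin k) ℝ)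
    (Oi' : Matrix (Fin pi) (Fin k) ℝ) (Oj' : Matrix (Fin pj) (Fin k) ℝ)
    (hOi : ∀ v : Fin k → ℝ, Oi.mulVec v = 0 → v = 0)
    (hOj : ∀ v : Fin k → ℝ, Oj.mulVec v = 0 → v = 0)
    (hOi' : ∀ v : Fin k → ℝ, Oi'.mulVec v = 0 → v = 0)
    (hOj' : ∀ v : Fin k → ℝ, Oj'.mulVec v = 0 → v = 0)
    (a b : Fin k → ℝ) (ha : ∀ s, a s ≠ 0) (hb : ∀ s, b s ≠ 0)
    (hratio : ∀ s t, s ≠ t → b s / a s ≠ b t / a t)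
    (h1 : Oi' * diagonal a * Oj'ᵀ = Oi * diagonal a * Ojᵀ)
    (h2 : Oi' * diagonal b * Oj'ᵀ = Oi * diagonal b * Ojᵀ) :
    (∀ s : Fin k, ∃ t : Fin k, ∃ δ : ℝ, δ ≠ 0 ∧
        (∀ r, Oi' r t = δ * Oi r s) ∧ (∀ r, Oj' r t = Oj r s / δ)) ∧
      {M : Matrix (Fin pi) (Fin pj) ℝ |
          ∃ s : Fin k, M = fun r c => Oi r s * Oj c s} =
        {M : Matrix (Fin pi) (Fin pj) ℝ |
          ∃ s : Fin k, M = fun r c => Oi' r s * Oj' c s} := by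
  -- factor Oi' = Oi * P and Oj' = Oj * Q
  obtain ⟨P, hP⟩ := key_factor' Oi Oi' Oj' hOj' a ha (diagonal a * Ojᵀ)
    (by rw [← Matrix.mul_assoc]; exact h1)
  have h1t : Oj' * diagonal a * Oi'ᵀ = Oj * (diagonal a * Oiᵀ) := by
    have := congrArg Matrix.transpose h1
    simpa [Matrix.transpose_mul, Matrix.diagonal_transpose, Matrix.mul_assoc] using this
  obtain ⟨Q, hQ⟩ := key_factor' Oj Oj' Oi' hOi' a ha (diagonal a * Oiᵀ) h1t
  -- P * D(a) * Qᵀ = D(a), P * D(b) * Qᵀ = D(b)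
  have cancel : ∀ X Y : Matrix (Fin k) (Fin k) ℝ,
      Oi * X * Ojᵀ = Oi * Y * Ojᵀ → X = Y := by
    intro X Y h
    exact left_cancel' Oi hOi X Y
      (right_cancel' Oj hOj (Oi * X) (Oi * Y) h)
  have hPa : P * (diagonal a * Qᵀ) = diagonal a := by
    apply cancel
    rw [hP, hQ] at h1
    simp only [Matrix.transpose_mul, Matrix.mul_assoc] at h1 ⊢
    exact h1
  have hPb : P * (diagonal b * Qᵀ) = diagonal b := by
    apply cancel
    rw [hP, hQ] at h2
    simp only [Matrix.transpose_mul, Matrix.mul_assoc] at h2 ⊢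
    exact h2
  -- P is invertible
  have hPunit : IsUnit P := by
    have hmul : P * (diagonal a * Qᵀ * diagonal (fun s => (a s)⁻¹)) = 1 := by
      calc P * (diagonal a * Qᵀ * diagonal (fun s => (a s)⁻¹))
          = (P * (diagonal a * Qᵀ)) * diagonal (fun s => (a s)⁻¹) := by
            simp [Matrix.mul_assoc]
        _ = diagonal a * diagonal (fun s => (a s)⁻¹) := by rw [hPa]
        _ = 1 := diag_mul_inv' a ha
    have := invertibleOfRightInverse _ _ hmul
    exact isUnit_of_invertible P
  have hPdet : IsUnit P.det := (Matrix.isUnit_iff_isUnit_det _).mp hPunit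
  have hPinv : P⁻¹ * P = 1 := Matrix.nonsing_inv_mul _ hPdet
  -- D(a) Qᵀ = P⁻¹ D(a)
  have hQa : diagonal a * Qᵀ = P⁻¹ * diagonal a := by
    calc diagonal a * Qᵀ = (P⁻¹ * P) * (diagonal a * Qᵀ) := by rw [hPinv, Matrix.one_mul]
      _ = P⁻¹ * (P * (diagonal a * Qᵀ)) := by simp [Matrix.mul_assoc]
      _ = P⁻¹ * diagonal a := by rw [hPa]
  -- commutation with D(c), c = b/a
  set c : Fin k → ℝ := fun s => b s / a s with hc
  have hbc : diagonal b = diagonal c * diagonal a := by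
    rw [Matrix.diagonal_mul_diagonal]
    exact (congrArg Matrix.diagonal
      (funext fun i => div_mul_cancel₀ (b i) (ha i))).symm
  have e2 : P * (diagonal c * P⁻¹) = diagonal c := by
    have e : P * (diagonal c * (P⁻¹ * diagonal a)) = diagonal c * diagonal a := by
      rw [← hQa]
      have := hPb
      rw [hbc] at this
      simpa only [Matrix.mul_assoc] using this
    have h4 := congrArg (· * diagonal (fun s => (a s)⁻¹)) e
    simp only [Matrix.mul_assoc] at h4
    rw [diag_mul_inv' a ha, Matrix.mul_one, Matrix.mul_one] at h4
    exact h4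
  have hcomm : P * diagonal c = diagonal c * P := by
    have h5 := congrArg (· * P) e2
    simp only [Matrix.mul_assoc] at h5
    rw [hPinv, Matrix.mul_one] at h5
    exact h5
  -- P is diagonal
  have hPd : ∀ s t : Fin k, s ≠ t → P s t = 0 := by
    intro s t hst
    have h' := congrFun (congrFun hcomm s) t
    rw [Matrix.mul_diagonal, Matrix.diagonal_mul] at h'
    by_contra hP0
    exact (hratio s t hst) (mul_left_cancel₀ hP0 (by rw [h', mul_comm])).symm
  set d : Fin k → ℝ := fun s => P s s with hd
  have hPdiag : P = diagonal d := by
    ext s t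
    by_cases h : s = t
    · subst h; simp [Matrix.diagonal_apply_eq, hd]
    · rw [Matrix.diagonal_apply_ne _ h]; exact hPd s t h
  have hdnz : ∀ s, d s ≠ 0 := by
    intro s hs
    rw [hPdiag, Matrix.det_diagonal] at hPdet
    rw [isUnit_iff_ne_zero] at hPdet
    exact hPdet (Finset.prod_eq_zero (Finset.mem_univ s) hs)
  -- P⁻¹ and Qᵀ are diagonal
  have hPinveq : P⁻¹ = diagonal (fun s => (d s)⁻¹) := by
    rw [hPdiag]
    exact Matrix.inv_eq_right_inv (diag_mul_inv' d hdnz)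
  have hQdiag : Q = diagonal (fun s => (d s)⁻¹) := by
    have h' : diagonal a * Qᵀ = diagonal a * diagonal (fun s => (d s)⁻¹) := by
      rw [hQa, hPinveq, Matrix.diagonal_mul_diagonal, Matrix.diagonal_mul_diagonal]
      exact congrArg Matrix.diagonal (funext fun i => mul_comm _ _)
    have hia : diagonal (fun s => (a s)⁻¹) * diagonal a = (1 : Matrix (Fin k) (Fin k) ℝ) := by
      rw [Matrix.diagonal_mul_diagonal]
      have hfun : (fun i => (a i)⁻¹ * a i) = fun _ => (1 : ℝ) :=
        funext fun i => inv_mul_cancel₀ (ha i)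
      rw [hfun, Matrix.diagonal_one]
    have hQt : Qᵀ = diagonal (fun s => (d s)⁻¹) := by
      calc Qᵀ = (diagonal (fun s => (a s)⁻¹) * diagonal a) * Qᵀ := by
            rw [hia, Matrix.one_mul]
        _ = diagonal (fun s => (a s)⁻¹) * (diagonal a * Qᵀ) := by rw [Matrix.mul_assoc]
        _ = diagonal (fun s => (a s)⁻¹) * (diagonal a * diagonal (fun s => (d s)⁻¹)) := by rw [h']
        _ = (diagonal (fun s => (a s)⁻¹) * diagonal a) * diagonal (fun s => (d s)⁻¹) := by
            rw [Matrix.mul_assoc]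
        _ = diagonal (fun s => (d s)⁻¹) := by rw [hia, Matrix.one_mul]
    calc Q = Qᵀᵀ := (Matrix.transpose_transpose Q).symm
      _ = (diagonal (fun s => (d s)⁻¹))ᵀ := by rw [hQt]
      _ = diagonal (fun s => (d s)⁻¹) := Matrix.diagonal_transpose _
  -- entrywise formulas
  have hOie : ∀ r s, Oi' r s = Oi r s * d s := by
    intro r s
    rw [hP, hPdiag, Matrix.mul_diagonal]
  have hOje : ∀ r s, Oj' r s = Oj r s * (d s)⁻¹ := by
    intro r s
    rw [hQ, hQdiag, Matrix.mul_diagonal]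
  constructor
  · intro s
    refine ⟨s, d s, hdnz s, fun r => by rw [hOie]; ring, fun r => by
      rw [hOje, div_eq_mul_inv]⟩
  · ext M
    simp only [Set.mem_setOf_eq]
    constructor
    · rintro ⟨s, rfl⟩
      refine ⟨s, ?_⟩
      funext r cc
      rw [hOie, hOje]
      field_simp [hdnz s]
    · rintro ⟨s, rfl⟩
      refine ⟨s, ?_⟩
      funext r cc
      rw [hOie, hOje]
      field_simp [hdnz s]
end

section
/- Let Q_{i,j} = p(w_1=i, w_2=j) be a joint distribution of two words generated by an LDA-type model with topic variable z: p(w_2=j | w_1=i) = ∑_{t=1}^k p(z_1=t | w_1=i) p(w_2=j | z_1=t), and suppose for each topic t there is an anchor word v_t with p(z_1=t | w_1=v_t) = 1. Then for all i, j: Q_{i,j} = ∑_{t=1}^k (p(w_1=i | z_1=t) / p(w_1=v_t | z_1=t)) · Q_{v_t, j}. -/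
/-- Joint probability of the word pair `(w₁=i, w₂=j)` (`Q` matrix),
from the joint distribution `J` over `(w₁, w₂, z₁)`. -/
def Q {W Z : Type*} [Fintype Z] (J : W → W → Z → ℝ) (i j : W) : ℝ := ∑ t, J i j t

/-- Marginal probability `p(w₁ = i)`. -/
def pW1 {W Z : Type*} [Fintype W] [Fintype Z] (J : W → W → Z → ℝ) (i : W) : ℝ :=
  ∑ j, ∑ t, J i j t

/-- Marginal probability `p(z₁ = t)`. -/
def pZ {W Z : Type*} [Fintype W] (J : W → W → Z → ℝ) (t : Z) : ℝ :=
  ∑ i, ∑ j, J i j t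

/-- Joint probability `p(w₁ = i, z₁ = t)`. -/
def pW1Z {W Z : Type*} [Fintype W] (J : W → W → Z → ℝ) (i : W) (t : Z) : ℝ :=
  ∑ j, J i j t

/-- Joint probability `p(w₂ = j, z₁ = t)`. -/
def pW2Z {W Z : Type*} [Fintype W] (J : W → W → Z → ℝ) (j : W) (t : Z) : ℝ :=
  ∑ i, J i j t

/-- Anchor-word identity for LDA: with an anchor word `v t` for each topic `t`
(`p(z₁=t | w₁=v t) = 1`), the word co-occurrence matrix satisfies
`Q_{ij} = ∑_t (p(w₁=i|z₁=t)/p(w₁=v_t|z₁=t)) · Q_{v_t, j}`. -/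
theorem lda_anchor_word_conical_hull
    {W Z : Type*} [Fintype W] [Fintype Z]
    (J : W → W → Z → ℝ)
    (hJ : ∀ i j t, 0 ≤ J i j t)
    (hsum : ∑ i, ∑ j, ∑ t, J i j t = 1)
    (hCI : ∀ i j t, J i j t * pZ J t = pW1Z J i t * pW2Z J j t)
    (hposW : ∀ i, 0 < pW1 J i) (hposZ : ∀ t, 0 < pZ J t)
    (v : Z → W)
    (hanchor : ∀ t, pW1Z J (v t) t / pW1 J (v t) = 1) :
    ∀ i j, Q J i j =
      ∑ t, ((pW1Z J i t / pZ J t) / (pW1Z J (v t) t / pZ J t)) * Q J (v t) j := by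

  classical
  intro i j
  have hvt : ∀ t, pW1Z J (v t) t = pW1 J (v t) := by
    intro t
    have h := hanchor t
    have := (div_eq_one_iff_eq (hposW (v t)).ne').mp h
    exact this
  have hW1Zsum : ∀ i, pW1 J i = ∑ t, pW1Z J i t := by
    intro i
    simp only [pW1, pW1Z]
    exact Finset.sum_comm
  have hW1Znn : ∀ i t, 0 ≤ pW1Z J i t := by
    intro i t
    exact Finset.sum_nonneg fun j _ => hJ i j t
  have hW2Znn : ∀ j t, 0 ≤ pW2Z J j t := by
    intro j t
    exact Finset.sum_nonneg fun i _ => hJ i j t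
  -- pW1Z (v t) s = 0 for s ≠ t
  have hzero : ∀ t s, s ≠ t → pW1Z J (v t) s = 0 := by
    intro t s hst
    have hsplit : ∑ u, pW1Z J (v t) u = pW1Z J (v t) t +
        ∑ u ∈ Finset.univ.erase t, pW1Z J (v t) u := by
      rw [Finset.add_sum_erase _ _ (Finset.mem_univ t)]
    have h0 : ∑ u ∈ Finset.univ.erase t, pW1Z J (v t) u = 0 := by
      have := hW1Zsum (v t)
      rw [hvt t] at hsplit
      linarith [this ▸ hsplit]
    have := (Finset.sum_eq_zero_iff_of_nonneg
      (fun u _ => hW1Znn (v t) u)).mp h0 s (Finset.mem_erase.mpr ⟨hst, Finset.mem_univ s⟩)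
    exact this
  have hJformula : ∀ i j t, J i j t = pW1Z J i t * pW2Z J j t / pZ J t := by
    intro i j t
    have hz := (hposZ t).ne'
    field_simp
    linarith [hCI i j t]
  have hQv : ∀ t, Q J (v t) j = pW1 J (v t) * pW2Z J j t / pZ J t := by
    intro t
    have : Q J (v t) j = J (v t) j t := by
      rw [Q]
      apply Finset.sum_eq_single
      · intro s _ hst
        rw [hJformula, hzero t s hst]
        simp
      · intro h; exact absurd (Finset.mem_univ t) h
    rw [this, hJformula, hvt]
  rw [Q]
  apply Finset.sum_congr rfl
  intro t _
  rw [hQv t, hvt t, hJformula i j t]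
  have hz := (hposZ t).ne'
  have hw := (hposW (v t)).ne'
  field_simp
end
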